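/- The map ψ restricts to a bijection from the set of matrices W ∈ Matrix (Fin n) (Fin n) ℝ satisfying the strict trapeze inequalities and the strict parallelogram inequalities onto the set TPtrop of n×n tropical totally positive matrices. -/

import Mathlib

open Finset

/-- Truncated predecessor in `Fin n` (1-indexed entry `i-1`). -/
def fpred {n : ℕ} (j : Fin n) : Fin n :=
  ⟨j.val - 1, Nat.lt_of_le_of_lt (Nat.sub_le _ _) j.isLt⟩

/-- `ψ(W)_{i,j}` is the tropical weight of the uppermost path from source `i`
to target `j` in the canonical planar network `G_n`. -/
def psi (n : ℕ) (W : Matrix (Fin n) (Fin n) ℝ) : Matrix (Fin n) (Fin n) ℝ :=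
  fun i j => if i ≤ j then ∑ t ∈ Finset.Icc i j, W i t else ∑ t ∈ Finset.Icc j i, W t j

/-- The map `φ`, inverse of `ψ`. -/
def phi (n : ℕ) (A : Matrix (Fin n) (Fin n) ℝ) : Matrix (Fin n) (Fin n) ℝ :=
  fun i j =>
    if i = j then A i j
    else if i < j then A i j - A i (fpred j)
    else A i j - A (fpred i) j

/-- Weak trapeze inequalities. -/
def WeakTrapeze (n : ℕ) (W : Matrix (Fin n) (Fin n) ℝ) : Prop :=
  ∀ i : Fin n, 0 < i.val →
    W i (fpred i) + W (fpred i) (fpred i) + W (fpred i) i ≤ W i i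

/-- Strict trapeze inequalities. -/
def StrictTrapeze (n : ℕ) (W : Matrix (Fin n) (Fin n) ℝ) : Prop :=
  ∀ i : Fin n, 0 < i.val →
    W i (fpred i) + W (fpred i) (fpred i) + W (fpred i) i < W i i

/-- Weak parallelogram inequalities. -/
def WeakPara (n : ℕ) (W : Matrix (Fin n) (Fin n) ℝ) : Prop :=
  ∀ i j : Fin n, ∀ _h : j.val + 2 ≤ i.val,
    W i j ≤ W i ⟨j.val + 1, by have := i.isLt; omega⟩ ∧
    W j i ≤ W ⟨j.val + 1, by have := i.isLt; omega⟩ i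

/-- Strict parallelogram inequalities. -/
def StrictPara (n : ℕ) (W : Matrix (Fin n) (Fin n) ℝ) : Prop :=
  ∀ i j : Fin n, ∀ _h : j.val + 2 ≤ i.val,
    W i j < W i ⟨j.val + 1, by have := i.isLt; omega⟩ ∧
    W j i < W ⟨j.val + 1, by have := i.isLt; omega⟩ i

/-- Maximum, over the permutations of sign `ε`, of the tropical weight of the
permutation in the `k × k` matrix `B` (computed in `WithBot ℝ`, the maximum over
the empty set being `⊥ = -∞`). -/
def tropPermSup (k : ℕ) (ε : ℤˣ) (B : Matrix (Fin k) (Fin k) (WithBot ℝ)) : WithBot ℝ :=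
  (Finset.univ.filter fun σ : Equiv.Perm (Fin k) => Equiv.Perm.sign σ = ε).sup
    fun σ => ∑ i, B i (σ i)

/-- Tropical total nonnegativity of a matrix over `ℝ ∪ {-∞}`. -/
def IsTropTN (n : ℕ) (A : Matrix (Fin n) (Fin n) (WithBot ℝ)) : Prop :=
  ∀ (k : ℕ) (r c : Fin k → Fin n), StrictMono r → StrictMono c →
    tropPermSup k (-1) (A.submatrix r c) ≤ tropPermSup k 1 (A.submatrix r c)

/-- Tropical total positivity of a real matrix. -/
def IsTropTP (n : ℕ) (A : Matrix (Fin n) (Fin n) ℝ) : Prop :=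
  ∀ (k : ℕ), 2 ≤ k → ∀ (r c : Fin k → Fin n), StrictMono r → StrictMono c →
    tropPermSup k (-1) ((A.map ((↑) : ℝ → WithBot ℝ)).submatrix r c) <
      tropPermSup k 1 ((A.map ((↑) : ℝ → WithBot ℝ)).submatrix r c)

/-- Max-plus matrix product. -/
def tropMul {l m p : ℕ} (A : Matrix (Fin l) (Fin m) (WithBot ℝ))
    (B : Matrix (Fin m) (Fin p) (WithBot ℝ)) : Matrix (Fin l) (Fin p) (WithBot ℝ) :=
  fun i j => Finset.univ.sup fun k => A i k + B k j

/-- Tropical identity matrix. -/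
def tropId (n : ℕ) : Matrix (Fin n) (Fin n) (WithBot ℝ) :=
  fun i j => if i = j then 0 else ⊥

/-- Tropical elementary Jacobi matrix `x_i(s)` (0-indexed: `s` in position `(i, i+1)`). -/
def xUp (n : ℕ) (i : ℕ) (s : ℝ) : Matrix (Fin n) (Fin n) (WithBot ℝ) :=
  fun a b => if a = b then 0 else if a.val = i ∧ b.val = i + 1 then (s : WithBot ℝ) else ⊥

/-- Tropical elementary Jacobi matrix `x̄_i(s)` (0-indexed: `s` in position `(i+1, i)`). -/
def xLow (n : ℕ) (i : ℕ) (s : ℝ) : Matrix (Fin n) (Fin n) (WithBot ℝ) :=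
  fun a b => if a = b then 0 else if a.val = i + 1 ∧ b.val = i then (s : WithBot ℝ) else ⊥

/-- Tropical elementary Jacobi matrix `x∘_i(s)` (0-indexed diagonal matrix,
`s` in position `(i, i)`). -/
def xDiag (n : ℕ) (i : ℕ) (s : ℝ) : Matrix (Fin n) (Fin n) (WithBot ℝ) :=
  fun a b => if a = b then (if a.val = i then (s : WithBot ℝ) else 0) else ⊥

/-- Entry of `W` looked up with natural-number (0-based) indices. -/
def wnat (n : ℕ) (W : Matrix (Fin n) (Fin n) ℝ) (a b : ℕ) : ℝ :=
  if h : a < n ∧ b < n then W ⟨a, h.1⟩ ⟨b, h.2⟩ else 0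

/-- The left part `L(W)` of the canonical planar network:
`L(W) = ⊙_{k=1}^{n−1} ⊙_{t=1}^{k} x̄_{n−k+t−1}(W_{n−k+t, t})` (1-indexed). -/
def Lmat (n : ℕ) (W : Matrix (Fin n) (Fin n) ℝ) : Matrix (Fin n) (Fin n) (WithBot ℝ) :=
  ((List.range (n - 1)).flatMap fun k => (List.range (k + 1)).map fun t =>
      xLow n (n - k + t - 2) (wnat n W (n - k + t - 1) t)).foldl tropMul (tropId n)

/-- The diagonal part `D(W) = x∘_1(W_{1,1}) ⊙ ⋯ ⊙ x∘_n(W_{n,n})` (1-indexed). -/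
def Dmat (n : ℕ) (W : Matrix (Fin n) (Fin n) ℝ) : Matrix (Fin n) (Fin n) (WithBot ℝ) :=
  ((List.range n).map fun i => xDiag n i (wnat n W i i)).foldl tropMul (tropId n)

/-- The tropical transfer matrix of the canonical totally connected planar
network `G_n` with weight matrix `W`: `T(W) = L(W) ⊙ D(W) ⊙ (L(Wᵀ))ᵀ`. -/
def Tmat (n : ℕ) (W : Matrix (Fin n) (Fin n) ℝ) : Matrix (Fin n) (Fin n) (WithBot ℝ) :=
  tropMul (tropMul (Lmat n W) (Dmat n W)) (Matrix.transpose (Lmat n W.transpose))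

lemma super_nat (n : ℕ) (a : ℕ → ℕ → ℝ)
    (hc : ∀ p q, p + 1 < n → q + 1 < n → a p (q+1) + a (p+1) q < a p q + a (p+1) (q+1)) :
    ∀ p p' q q', p < p' → q < q' → p' < n → q' < n →
      a p q' + a p' q < a p q + a p' q' := by
  have hrow : ∀ q d p, p + 1 < n → q + d + 1 < n →
      a p (q+d+1) + a (p+1) q < a p q + a (p+1) (q+d+1) := by
    intro q d
    induction d with
    | zero => intro p h1 h2; exact hc p q h1 (by omega)
    | succ d ih =>
        intro p h1 h2
        have h3 := ih p h1 (by omega)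
        have h4 := hc p (q+d+1) h1 (by omega)
        have he : q + (d+1) + 1 = (q+d+1)+1 := by ring
        rw [he]
        linarith
  have hcol : ∀ p e q q', q < q' → p + e + 1 < n → q' < n →
      a p q' + a (p+e+1) q < a p q + a (p+e+1) q' := by
    intro p e
    induction e with
    | zero =>
        intro q q' h1 h2 h3
        obtain ⟨d, rfl⟩ : ∃ d, q' = q + d + 1 := ⟨q' - q - 1, by omega⟩
        exact hrow q d p h2 h3
    | succ e ih =>
        intro q q' h1 h2 h3
        have h4 := ih q q' h1 (by omega) h3
        obtain ⟨d, rfl⟩ : ∃ d, q' = q + d + 1 := ⟨q' - q - 1, by omega⟩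
        have h5 := hrow q d (p+e+1) (by omega) h3
        have he : p + (e+1) + 1 = (p+e+1)+1 := by ring
        rw [he]
        linarith
  intro p p' q q' h1 h2 h3 h4
  obtain ⟨e, rfl⟩ : ∃ e, p' = p + e + 1 := ⟨p' - p - 1, by omega⟩
  exact hcol p e q q' h2 h3 h4

lemma Icc_succ_top' {n : ℕ} (a b : Fin n) (hab : a ≤ b) (h : b.val + 1 < n) :
    Finset.Icc a ⟨b.val+1, h⟩ = insert (⟨b.val+1, h⟩ : Fin n) (Finset.Icc a b) := by
  ext x
  simp only [Finset.mem_Icc, Finset.mem_insert, Fin.le_def, Fin.ext_iff]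
  rw [Fin.le_def] at hab
  omega

lemma sum_Icc_succ_top' {n : ℕ} (a b : Fin n) (hab : a ≤ b) (h : b.val + 1 < n) (f : Fin n → ℝ) :
    ∑ t ∈ Finset.Icc a ⟨b.val+1, h⟩, f t = (∑ t ∈ Finset.Icc a b, f t) + f ⟨b.val+1, h⟩ := by
  rw [Icc_succ_top' a b hab h, Finset.sum_insert (by
    simp only [Finset.mem_Icc, Fin.le_def, not_and]
    intro _
    omega)]
  ring

section PsiLemmas
variable {n : ℕ} (W : Matrix (Fin n) (Fin n) ℝ)

lemma psi_le {i j : Fin n} (h : i ≤ j) : psi n W i j = ∑ t ∈ Finset.Icc i j, W i t :=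
  if_pos h

lemma psi_gt {i j : Fin n} (h : j < i) : psi n W i j = ∑ t ∈ Finset.Icc j i, W t j :=
  if_neg (not_le.mpr h)

lemma psi_diag (i : Fin n) : psi n W i i = W i i := by
  rw [psi_le W le_rfl, Finset.Icc_self, Finset.sum_singleton]

lemma psi_step_right {i j : Fin n} (h : i ≤ j) (hj : j.val + 1 < n) :
    psi n W i ⟨j.val+1, hj⟩ = psi n W i j + W i ⟨j.val+1, hj⟩ := by
  have h2 : i ≤ (⟨j.val+1, hj⟩ : Fin n) := le_trans h (Fin.le_def.mpr (Nat.le_succ _))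
  rw [psi_le W h2, psi_le W h, sum_Icc_succ_top' i j h hj]

lemma psi_step_down {i j : Fin n} (h : j ≤ i) (hi : i.val + 1 < n) :
    psi n W ⟨i.val+1, hi⟩ j = psi n W i j + W ⟨i.val+1, hi⟩ j := by
  have h2 : j < (⟨i.val+1, hi⟩ : Fin n) := lt_of_le_of_lt h (Fin.lt_def.mpr (Nat.lt_succ_self _))
  rw [psi_gt W h2, sum_Icc_succ_top' j i h hi]
  rcases eq_or_lt_of_le h with rfl | h3
  · rw [psi_diag, Finset.Icc_self, Finset.sum_singleton]
  · rw [psi_gt W h3]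

end PsiLemmas

/-- Look up a `Fin n` matrix with `ℕ` indices (junk value out of range). -/
def natify {n : ℕ} (A : Matrix (Fin n) (Fin n) ℝ) (p q : ℕ) : ℝ :=
  if h : p < n ∧ q < n then A ⟨p, h.1⟩ ⟨q, h.2⟩ else 0

lemma natify_eq {n : ℕ} (A : Matrix (Fin n) (Fin n) ℝ) (i j : Fin n) :
    natify A i.val j.val = A i j :=
  dif_pos ⟨i.isLt, j.isLt⟩

lemma natify_mk {n : ℕ} (A : Matrix (Fin n) (Fin n) ℝ) {p q : ℕ} (hp : p < n) (hq : q < n) :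
    natify A p q = A ⟨p, hp⟩ ⟨q, hq⟩ :=
  dif_pos ⟨hp, hq⟩

section Contig
variable {n : ℕ} {W : Matrix (Fin n) (Fin n) ℝ}

lemma fpred_mk {n : ℕ} (p : ℕ) (h : p + 1 < n) :
    fpred (⟨p+1, h⟩ : Fin n) = ⟨p, by omega⟩ := by
  simp [fpred]

/-- contiguous 2×2 tropical positivity of `psi W`. -/
lemma contig_nat (hT : StrictTrapeze n W) (hP : StrictPara n W) :
    ∀ p q, p + 1 < n → q + 1 < n →
      natify (psi n W) p (q+1) + natify (psi n W) (p+1) q <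
        natify (psi n W) p q + natify (psi n W) (p+1) (q+1) := by
  intro p q hp hq
  have hpn : p < n := by omega
  have hqn : q < n := by omega
  set i : Fin n := ⟨p, hpn⟩ with hidef
  set j : Fin n := ⟨q, hqn⟩ with hjdef
  have hi : i.val + 1 < n := hp
  have hj : j.val + 1 < n := hq
  rw [natify_mk _ hpn hq, natify_mk _ hp hqn, natify_mk _ hpn hqn, natify_mk _ hp hq]
  show psi n W i ⟨j.val+1, hj⟩ + psi n W ⟨i.val+1, hi⟩ j <
    psi n W i j + psi n W ⟨i.val+1, hi⟩ ⟨j.val+1, hj⟩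
  rcases lt_trichotomy p q with hpq | rfl | hqp
  · -- strictly above the diagonal
    have h1 : i ≤ j := Fin.le_def.mpr (le_of_lt hpq)
    have h2 : (⟨i.val+1, hi⟩ : Fin n) ≤ j := Fin.le_def.mpr hpq
    rw [psi_step_right W h1 hj, psi_step_right W h2 hj]
    have h3 := (hP ⟨j.val+1, hj⟩ i (show p + 2 ≤ q + 1 by omega)).2
    have h4 : psi n W ⟨i.val+1, hi⟩ j + W i ⟨j.val+1, hj⟩ <
        psi n W ⟨i.val+1, hi⟩ j + W ⟨i.val+1, hi⟩ ⟨j.val+1, hj⟩ := by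
      have h3' : W i ⟨j.val+1, hj⟩ < W ⟨i.val+1, hi⟩ ⟨j.val+1, hj⟩ := h3
      linarith
    linarith
  · -- on the diagonal
    have e1 : psi n W i ⟨i.val+1, hi⟩ = psi n W i i + W i ⟨i.val+1, hi⟩ :=
      psi_step_right W le_rfl hi
    have e2 : psi n W ⟨i.val+1, hi⟩ i = psi n W i i + W ⟨i.val+1, hi⟩ i :=
      psi_step_down W le_rfl hi
    have e3 : psi n W i i = W i i := psi_diag W i
    have e4 : psi n W ⟨i.val+1, hi⟩ ⟨i.val+1, hi⟩ = W ⟨i.val+1, hi⟩ ⟨i.val+1, hi⟩ :=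
      psi_diag W _
    have h5 := hT ⟨i.val+1, hi⟩ (by simp)
    rw [fpred_mk p hi] at h5
    have h5' : W ⟨i.val+1, hi⟩ i + W i i + W i ⟨i.val+1, hi⟩ < W ⟨i.val+1, hi⟩ ⟨i.val+1, hi⟩ := h5
    rw [e1, e2, e3, e4]
    linarith
  · -- below the diagonal
    have h1 : j ≤ i := Fin.le_def.mpr (le_of_lt hqp)
    have h2 : (⟨j.val+1, hj⟩ : Fin n) ≤ i := Fin.le_def.mpr hqp
    rw [psi_step_down W h1 hi, psi_step_down W h2 hi]
    have h3 := (hP ⟨i.val+1, hi⟩ j (show q + 2 ≤ p + 1 by omega)).1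
    have h3' : W ⟨i.val+1, hi⟩ j < W ⟨i.val+1, hi⟩ ⟨j.val+1, hj⟩ := h3
    linarith

end Contig

section PhiPsi
variable {n : ℕ}

lemma phi_diag (A : Matrix (Fin n) (Fin n) ℝ) (i : Fin n) : phi n A i i = A i i := by
  simp [phi]

lemma phi_lt (A : Matrix (Fin n) (Fin n) ℝ) {i j : Fin n} (h : i < j) :
    phi n A i j = A i j - A i (fpred j) := by
  simp [phi, ne_of_lt h, h]

lemma phi_gt (A : Matrix (Fin n) (Fin n) ℝ) {i j : Fin n} (h : j < i) :
    phi n A i j = A i j - A (fpred i) j := by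
  simp [phi, h.ne', not_lt_of_gt h]

lemma phi_psi (W : Matrix (Fin n) (Fin n) ℝ) : phi n (psi n W) = W := by
  funext i j
  rcases lt_trichotomy i j with h | rfl | h
  · have hlt : i.val < j.val := Fin.lt_def.mp h
    have hfj : (fpred j).val + 1 < n := by
      have := j.isLt; simp only [fpred]; omega
    have hjj : j = ⟨(fpred j).val + 1, hfj⟩ :=
      Fin.ext (show j.val = j.val - 1 + 1 by omega)
    have hle : i ≤ fpred j := Fin.le_def.mpr (show i.val ≤ j.val - 1 by omega)
    rw [phi_lt _ h, hjj, psi_step_right W hle]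
    have h2 : fpred (⟨(fpred j).val + 1, hfj⟩ : Fin n) = fpred j := by simp [fpred]
    rw [h2]
    ring
  · rw [phi_diag, psi_diag]
  · have hlt : j.val < i.val := Fin.lt_def.mp h
    have hfi : (fpred i).val + 1 < n := by
      have := i.isLt; simp only [fpred]; omega
    have hii : i = ⟨(fpred i).val + 1, hfi⟩ :=
      Fin.ext (show i.val = i.val - 1 + 1 by omega)
    have hle : j ≤ fpred i := Fin.le_def.mpr (show j.val ≤ i.val - 1 by omega)
    rw [phi_gt _ h, hii, psi_step_down W hle]
    have h2 : fpred (⟨(fpred i).val + 1, hfi⟩ : Fin n) = fpred i := by simp [fpred]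
    rw [h2]
    ring

lemma psi_phi (A : Matrix (Fin n) (Fin n) ℝ) : psi n (phi n A) = A := by
  funext i j
  rcases le_or_gt i j with h | h
  · rw [psi_le _ h]
    obtain ⟨d, hd⟩ : ∃ d, j.val = i.val + d := ⟨j.val - i.val, by rw [Fin.le_def] at h; omega⟩
    clear h
    induction d generalizing j with
    | zero =>
        have : j = i := Fin.ext (by omega)
        subst this
        rw [Finset.Icc_self, Finset.sum_singleton, phi_diag]
    | succ d ih =>
        have hb : i.val + d < n := by have := j.isLt; omega
        have hb1 : i.val + d + 1 < n := by have := j.isLt; omega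
        set b : Fin n := ⟨i.val + d, hb⟩ with hbdef
        have hib : i ≤ b := Fin.le_def.mpr (show i.val ≤ i.val + d by omega)
        have hj : j = ⟨b.val + 1, show b.val + 1 < n from hb1⟩ :=
          Fin.ext (show j.val = i.val + d + 1 by omega)
        rw [hj, sum_Icc_succ_top' i b hib hb1, ih b rfl]
        have h1 : i < (⟨b.val + 1, hb1⟩ : Fin n) :=
          Fin.lt_def.mpr (show i.val < i.val + d + 1 by omega)
        rw [phi_lt _ h1]
        have h2 : fpred (⟨b.val + 1, hb1⟩ : Fin n) = b := by simp [fpred]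
        rw [h2]
        ring
  · rw [psi_gt _ h]
    obtain ⟨d, hd⟩ : ∃ d, i.val = j.val + d + 1 := ⟨i.val - j.val - 1, by rw [Fin.lt_def] at h; omega⟩
    clear h
    induction d generalizing i with
    | zero =>
        have hb : j.val + 1 < n := by have := i.isLt; omega
        have hi : i = ⟨j.val + 1, hb⟩ := Fin.ext (show i.val = j.val + 1 by omega)
        subst hi
        rw [sum_Icc_succ_top' j j le_rfl hb, Finset.Icc_self, Finset.sum_singleton, phi_diag]
        have h1 : j < (⟨j.val + 1, hb⟩ : Fin n) :=
          Fin.lt_def.mpr (show j.val < j.val + 1 by omega)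
        rw [phi_gt _ h1, fpred_mk _ hb]
        have h2 : (⟨j.val, by omega⟩ : Fin n) = j := Fin.ext rfl
        rw [h2]
        ring
    | succ d ih =>
        have hb : j.val + d + 1 < n := by have := i.isLt; omega
        have hb1 : j.val + d + 1 + 1 < n := by have := i.isLt; omega
        set b : Fin n := ⟨j.val + d + 1, hb⟩ with hbdef
        have hjb : j ≤ b := Fin.le_def.mpr (show j.val ≤ j.val + d + 1 by omega)
        have hi : i = ⟨b.val + 1, show b.val + 1 < n from hb1⟩ :=
          Fin.ext (show i.val = j.val + d + 1 + 1 by omega)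
        rw [hi, sum_Icc_succ_top' j b hjb hb1, ih b rfl]
        have h1 : j < (⟨b.val + 1, hb1⟩ : Fin n) :=
          Fin.lt_def.mpr (show j.val < j.val + d + 1 + 1 by omega)
        rw [phi_gt _ h1]
        have h2 : fpred (⟨b.val + 1, hb1⟩ : Fin n) = b := by simp [fpred]
        rw [h2]
        ring

end PhiPsi

section Perm

lemma wb_coe_sum {α : Type*} (s : Finset α) (f : α → ℝ) :
    ((∑ i ∈ s, f i : ℝ) : WithBot ℝ) = ∑ i ∈ s, ((f i : ℝ) : WithBot ℝ) := by
  induction s using Finset.cons_induction with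
  | empty => simp
  | cons a s ha ih => rw [Finset.sum_cons, Finset.sum_cons, WithBot.coe_add, ih]

lemma perm_eq_one_of_monotone {k : ℕ} {σ : Equiv.Perm (Fin k)}
    (h : Monotone (σ : Fin k → Fin k)) : σ = 1 := by
  have : WellFoundedLT (Fin k) := Finite.to_wellFoundedLT
  have hs : StrictMono (σ : Fin k → Fin k) := h.strictMono_of_injective σ.injective
  have h2 : StrictMono (σ.symm : Fin k → Fin k) := by
    intro a b hab
    rw [← σ.apply_symm_apply a, ← σ.apply_symm_apply b] at hab
    exact hs.lt_iff_lt.mp hab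
  ext i
  have ha : i ≤ σ i := StrictMono.le_apply (β := Fin k) hs
  have hb : σ i ≤ σ.symm (σ i) := StrictMono.le_apply (β := Fin k) h2
  simp only [Equiv.symm_apply_apply] at hb
  have : σ i = i := le_antisymm hb ha
  simp [this]

lemma perm_descent {k : ℕ} {σ : Equiv.Perm (Fin k)} (h : σ ≠ 1) :
    ∃ i j : Fin k, i < j ∧ σ j < σ i := by
  by_contra hcon
  push_neg at hcon
  apply h
  apply perm_eq_one_of_monotone
  intro a b hab
  rcases eq_or_lt_of_le hab with rfl | hab'
  · exact le_rfl
  · exact hcon a b hab'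

lemma tropTP_of_super {n : ℕ} (A : Matrix (Fin n) (Fin n) ℝ)
    (key : ∀ i i' j j' : Fin n, i < i' → j < j' → A i j' + A i' j < A i j + A i' j') :
    IsTropTP n A := by
  intro k hk r c hr hc
  set M := (A.map ((↑) : ℝ → WithBot ℝ)).submatrix r c with hM
  set g : Equiv.Perm (Fin k) → ℝ := fun σ => ∑ l, A (r l) (c (σ l)) with hg
  have hwt : ∀ σ : Equiv.Perm (Fin k), (∑ l, M l (σ l)) = ((g σ : ℝ) : WithBot ℝ) := by
    intro σ
    rw [hg, wb_coe_sum]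
    rfl
  -- the odd filter is nonempty
  have h01 : (⟨0, by omega⟩ : Fin k) ≠ ⟨1, by omega⟩ := by
    simp [Fin.ext_iff]
  have hswap : Equiv.Perm.sign (Equiv.swap (⟨0, by omega⟩ : Fin k) ⟨1, by omega⟩) = -1 :=
    Equiv.Perm.sign_swap h01
  have hne : (Finset.univ.filter fun σ : Equiv.Perm (Fin k) =>
      Equiv.Perm.sign σ = (-1 : ℤˣ)).Nonempty :=
    ⟨_, Finset.mem_filter.mpr ⟨Finset.mem_univ _, hswap⟩⟩
  obtain ⟨σ, hσmem, hσeq⟩ := Finset.exists_mem_eq_sup _ hne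
    (fun σ : Equiv.Perm (Fin k) => ∑ l, M l (σ l))
  have hσsign : Equiv.Perm.sign σ = (-1 : ℤˣ) := (Finset.mem_filter.mp hσmem).2
  have hσne : σ ≠ 1 := by
    intro h1
    rw [h1] at hσsign
    simp at hσsign
  obtain ⟨i, j, hij, hσij⟩ := perm_descent hσne
  set τ : Equiv.Perm (Fin k) := σ * Equiv.swap i j with hτ
  have hτsign : Equiv.Perm.sign τ = (1 : ℤˣ) := by
    rw [hτ, Equiv.Perm.sign_mul, hσsign, Equiv.Perm.sign_swap (ne_of_lt hij)]
    decide
  have hτmem : τ ∈ Finset.univ.filter fun σ : Equiv.Perm (Fin k) =>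
      Equiv.Perm.sign σ = (1 : ℤˣ) := Finset.mem_filter.mpr ⟨Finset.mem_univ _, hτsign⟩
  -- compare the weights of σ and τ
  have hsplit : ∀ f : Fin k → ℝ, ∑ l, f l = f i + f j + ∑ l ∈ Finset.univ \ {i, j}, f l := by
    intro f
    rw [← Finset.sum_sdiff (Finset.subset_univ ({i, j} : Finset (Fin k))),
      Finset.sum_pair (ne_of_lt hij)]
    ring
  have hgt : g σ < g τ := by
    rw [hg]
    simp only []
    rw [hsplit (fun l => A (r l) (c (σ l))), hsplit (fun l => A (r l) (c (τ l)))]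
    have hrest : ∑ l ∈ Finset.univ \ {i, j}, A (r l) (c (τ l)) =
        ∑ l ∈ Finset.univ \ {i, j}, A (r l) (c (σ l)) := by
      refine Finset.sum_congr rfl fun l hl => ?_
      simp only [Finset.mem_sdiff, Finset.mem_insert, Finset.mem_singleton] at hl
      have h1 : l ≠ i := fun e => hl.2 (Or.inl e)
      have h2 : l ≠ j := fun e => hl.2 (Or.inr e)
      rw [hτ]
      simp [Equiv.Perm.mul_apply, Equiv.swap_apply_of_ne_of_ne h1 h2]
    have hti : τ i = σ j := by rw [hτ]; simp [Equiv.Perm.mul_apply]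
    have htj : τ j = σ i := by rw [hτ]; simp [Equiv.Perm.mul_apply]
    rw [hrest, hti, htj]
    have := key (r i) (r j) (c (σ j)) (c (σ i)) (hr hij) (hc hσij)
    linarith
  calc tropPermSup k (-1) M = ∑ l, M l (σ l) := hσeq
    _ = ((g σ : ℝ) : WithBot ℝ) := hwt σ
    _ < ((g τ : ℝ) : WithBot ℝ) := WithBot.coe_lt_coe.mpr hgt
    _ = ∑ l, M l (τ l) := (hwt τ).symm
    _ ≤ tropPermSup k 1 M := Finset.le_sup (f := fun σ : Equiv.Perm (Fin k) => ∑ l, M l (σ l)) hτmem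

end Perm

section TwoMinor
variable {n : ℕ}

lemma fin2_perm_cases : ∀ σ : Equiv.Perm (Fin 2), σ = 1 ∨ σ = Equiv.swap 0 1 := by decide

lemma two_minor {A : Matrix (Fin n) (Fin n) ℝ} (hA : IsTropTP n A) :
    ∀ i i' j j' : Fin n, i < i' → j < j' → A i j' + A i' j < A i j + A i' j' := by
  intro i i' j j' hii hjj
  have hr : StrictMono ![i, i'] := by
    intro a b hab
    fin_cases a <;> fin_cases b <;> simp_all
  have hc : StrictMono ![j, j'] := by
    intro a b hab
    fin_cases a <;> fin_cases b <;> simp_all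
  have h2 := hA 2 le_rfl ![i, i'] ![j, j'] hr hc
  set M := (A.map ((↑) : ℝ → WithBot ℝ)).submatrix ![i, i'] ![j, j'] with hM
  have hM00 : M 0 0 = ((A i j : ℝ) : WithBot ℝ) := rfl
  have hM01 : M 0 1 = ((A i j' : ℝ) : WithBot ℝ) := rfl
  have hM10 : M 1 0 = ((A i' j : ℝ) : WithBot ℝ) := rfl
  have hM11 : M 1 1 = ((A i' j' : ℝ) : WithBot ℝ) := rfl
  have hub : tropPermSup 2 1 M ≤ ((A i j + A i' j' : ℝ) : WithBot ℝ) := by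
    apply Finset.sup_le
    intro σ hσ
    rw [Finset.mem_filter] at hσ
    rcases fin2_perm_cases σ with rfl | rfl
    · rw [Fin.sum_univ_two]
      simp only [Equiv.Perm.one_apply]
      rw [hM00, hM11, ← WithBot.coe_add]
    · exfalso
      rw [Equiv.Perm.sign_swap (by decide)] at hσ
      exact absurd hσ.2 (by decide)
  have hlb : ((A i j' + A i' j : ℝ) : WithBot ℝ) ≤ tropPermSup 2 (-1) M := by
    have hmem : Equiv.swap (0 : Fin 2) 1 ∈ Finset.univ.filter
        fun σ : Equiv.Perm (Fin 2) => Equiv.Perm.sign σ = (-1 : ℤˣ) := by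
      refine Finset.mem_filter.mpr ⟨Finset.mem_univ _, ?_⟩
      rw [Equiv.Perm.sign_swap (by decide)]
    have := Finset.le_sup (f := fun σ : Equiv.Perm (Fin 2) => ∑ l, M l (σ l)) hmem
    refine le_trans (le_of_eq ?_) this
    show (((A i j' + A i' j : ℝ)) : WithBot ℝ) = ∑ l, M l (Equiv.swap (0 : Fin 2) 1 l)
    rw [Fin.sum_univ_two, Equiv.swap_apply_left, Equiv.swap_apply_right,
      hM01, hM10, ← WithBot.coe_add]
  have := lt_of_le_of_lt hlb (lt_of_lt_of_le h2 hub)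
  exact_mod_cast this

end TwoMinor

section Final
variable {n : ℕ}

lemma phiA_trapeze {A : Matrix (Fin n) (Fin n) ℝ} (hA : IsTropTP n A) :
    StrictTrapeze n (phi n A) := by
  intro i hi
  have hpi : fpred i < i := Fin.lt_def.mpr (show i.val - 1 < i.val by omega)
  rw [phi_gt A hpi, phi_diag, phi_lt A hpi, phi_diag]
  have := two_minor hA (fpred i) i (fpred i) i hpi hpi
  linarith

lemma phiA_para {A : Matrix (Fin n) (Fin n) ℝ} (hA : IsTropTP n A) :
    StrictPara n (phi n A) := by
  intro i j h
  have hj1 : j.val + 1 < n := by have := i.isLt; omega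
  set jj : Fin n := ⟨j.val + 1, hj1⟩ with hjj
  have hji : j < i := Fin.lt_def.mpr (by omega)
  have hjji : jj < i := Fin.lt_def.mpr (show j.val + 1 < i.val by omega)
  have hjjj : j < jj := Fin.lt_def.mpr (show j.val < j.val + 1 by omega)
  have hpi : fpred i < i := Fin.lt_def.mpr (show i.val - 1 < i.val by omega)
  constructor
  · show phi n A i j < phi n A i jj
    rw [phi_gt A hji, phi_gt A hjji]
    have := two_minor hA (fpred i) i j jj hpi hjjj
    linarith
  · show phi n A j i < phi n A jj i
    rw [phi_lt A hji, phi_lt A hjji]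
    have := two_minor hA j jj (fpred i) i hjjj hpi
    linarith

lemma psi_mem_TP {W : Matrix (Fin n) (Fin n) ℝ}
    (hT : StrictTrapeze n W) (hP : StrictPara n W) : IsTropTP n (psi n W) := by
  apply tropTP_of_super
  intro i i' j j' hii hjj
  have hsn := super_nat n (natify (psi n W)) (contig_nat hT hP) i.val i'.val j.val j'.val
    (Fin.lt_def.mp hii) (Fin.lt_def.mp hjj) i'.isLt j'.isLt
  simpa only [natify_eq] using hsn

end Final


/-- `ψ` is a bijection from the weight matrices satisfying the
strict trapeze and parallelogram inequalities onto `TPtrop`. -/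
theorem psi_bijOn_TP (n : ℕ) :
    Set.BijOn (psi n) {W | StrictTrapeze n W ∧ StrictPara n W}
      {A | IsTropTP n A} := by
  refine ⟨?_, ?_, ?_⟩
  · intro W hW
    exact psi_mem_TP hW.1 hW.2
  · intro W _ W' _ h
    have := congrArg (phi n) h
    rwa [phi_psi, phi_psi] at this
  · intro A hA
    exact ⟨phi n A, ⟨phiA_trapeze hA, phiA_para hA⟩, psi_phi A⟩
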